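/- Let L be a vector space of dimension p+3. Then the zero locus in P(L ⊕ Λ²L) of the quadrics in the image of Λ³L → L ⊗ Λ²L (i.e. Gensyz_p(L)) equals the union of the Plücker-embedded Grassmannian Gr(p+4, 2) and the linear subspace P(Λ²L) = V(L) of codimension p+3. -/

import Mathlib

open Matrix

private lemma rank_submatrix_le_gen {K : Type*} [Field K] {m n : ℕ}
    (M : Matrix (Fin m) (Fin m) K) (f g : Fin n → Fin m) :
    (M.submatrix f g).rank ≤ M.rank := by
  have h : M.submatrix f g =
      (1 : Matrix (Fin m) (Fin m) K).submatrix f id * M *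
        (1 : Matrix (Fin m) (Fin m) K).submatrix id g := by
    ext i j
    simp [Matrix.mul_apply, Matrix.submatrix_apply, Matrix.one_apply, ite_mul, mul_ite,
      Finset.sum_ite_eq, Finset.sum_ite_eq']
  rw [h]
  exact le_trans (Matrix.rank_mul_le_left _ _) (Matrix.rank_mul_le_right _ _)

/-- **`Gensyz_p(L) = Gr(p+4,2) ∪ P^{N−p−3}` for `dim L = p+3`.**
Identify points of (the affine cone over) `P(L ⊕ Λ²L) ≅ P(Λ²U)`, `U = k ⊕ L` of dimension
`p+4`, with skew-symmetric `(p+4)×(p+4)` matrices `M`; the summand `L` corresponds to the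
first row `(0, l₁, …, l_{p+3})`.  The quadrics in the image of `Λ³L → L ⊗ Λ²L` are the
`4×4` Pfaffians of `M` involving the first row and column, and their common zero locus is
the union of the Plücker-embedded Grassmannian `Gr(p+4, 2)` (the rank-`≤2` locus) and the
linear subspace `V(L) = P(Λ²L)` of codimension `p+3` (where the first row vanishes). -/
theorem gensyz_rank_p_add_three (K : Type*) [Field K] (p : ℕ)
    (M : Matrix (Fin (p + 4)) (Fin (p + 4)) K)
    (hskew : M.transpose = -M) (hdiag : ∀ i, M i i = 0) :
    (∀ j k l : Fin (p + 4),
        M 0 j * M k l - M 0 k * M j l + M 0 l * M j k = 0) ↔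
      (M.rank ≤ 2 ∨ ∀ j : Fin (p + 4), M 0 j = 0) := by
  classical
  have key : ∀ a b, M a b = -M b a := by
    intro a b
    have := congrFun (congrFun hskew b) a
    simpa [Matrix.transpose_apply] using this
  constructor
  · intro H
    by_cases h0 : ∀ j : Fin (p + 4), M 0 j = 0
    · exact Or.inr h0
    · left
      push_neg at h0
      obtain ⟨j0, hc⟩ := h0
      rw [Matrix.rank_eq_finrank_span_row]
      have hsub : Submodule.span K (Set.range M) ≤
          Submodule.span K ({M 0, M j0} : Set (Fin (p + 4) → K)) := by
        rw [Submodule.span_le]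
        rintro _ ⟨k, rfl⟩
        rw [SetLike.mem_coe, Submodule.mem_span_pair]
        refine ⟨-((M 0 j0)⁻¹ * M j0 k), (M 0 j0)⁻¹ * M 0 k, ?_⟩
        funext l
        have hl := H j0 k l
        have hinv : (M 0 j0)⁻¹ * M 0 j0 = 1 := inv_mul_cancel₀ hc
        simp only [Pi.add_apply, Pi.smul_apply, smul_eq_mul]
        linear_combination (-(M 0 j0)⁻¹) * hl + (M k l) * hinv
      have hfin : Module.finrank K
          (Submodule.span K ({M 0, M j0} : Set (Fin (p + 4) → K))) ≤ 2 := by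
        have hset : ({M 0, M j0} : Set (Fin (p + 4) → K)) =
            (({M 0, M j0} : Finset (Fin (p + 4) → K)) : Set (Fin (p + 4) → K)) := by simp
        rw [hset]
        refine le_trans (finrank_span_finset_le_card (R := K) _) ?_
        exact le_trans (Finset.card_insert_le _ _) (by simp)
      exact le_trans (Submodule.finrank_mono hsub) hfin
  · intro h j k l
    rcases h with h | h
    · set f : Fin 4 → Fin (p + 4) := ![0, j, k, l] with hf
      set N := M.submatrix f f with hN
      have hNeq : N = !![0, M 0 j, M 0 k, M 0 l;
                         -M 0 j, 0, M j k, M j l;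
                         -M 0 k, -M j k, 0, M k l;
                         -M 0 l, -M j l, -M k l, 0] := by
        ext a b
        fin_cases a <;> fin_cases b <;>
          simp [hN, hf, Matrix.submatrix_apply] <;>
          first
            | exact hdiag _
            | exact key _ _
      have hdet : N.det = (M 0 j * M k l - M 0 k * M j l + M 0 l * M j k) ^ 2 := by
        rw [hNeq]
        simp [Matrix.det_succ_row_zero, Fin.sum_univ_succ]
        simp (config := {decide := true}) [Fin.succAbove]
        ring
      have hrankN : N.rank ≤ 2 := le_trans (rank_submatrix_le_gen M f f) h
      have hdet0 : N.det = 0 := by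
        by_contra hne
        have : N.rank = 4 := by
          have hu : IsUnit N := (Matrix.isUnit_iff_isUnit_det N).mpr (isUnit_iff_ne_zero.mpr hne)
          simpa using Matrix.rank_of_isUnit N hu
        omega
      rw [hdet] at hdet0
      exact pow_eq_zero_iff (by norm_num) |>.mp hdet0
    · simp [h j, h k, h l]
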